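/- Let (X, Ω) be a measurable space and E a Dedekind complete vector lattice. For two finite (E⁺-valued) measures μ, ν on Ω, the set map ρ(Δ) := inf{μ(Γ) + ν(Δ∖Γ) : Γ ∈ Ω, Γ ⊆ Δ} is a finite E⁺-valued measure and is the infimum of μ and ν in the cone of E̅⁺-valued measures. Moreover μ∨ν + μ∧ν = μ + ν. -/

import Mathlib

set_option linter.unusedSectionVars false

section Aux
variable {X : Type*} [MeasurableSpace X]
variable {F : Type*} [AddCommMonoid F] [PartialOrder F]
  [CovariantClass F F (· + ·) (· ≤ ·)] [CovariantClass F F (Function.swap (· + ·)) (· ≤ ·)]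

theorem my_meas_add {m : Set X → F} (h0 : m ∅ = 0)
    (hpos : ∀ Δ, MeasurableSet Δ → 0 ≤ m Δ)
    (hsig : ∀ Δ : ℕ → Set X, (∀ n, MeasurableSet (Δ n)) →
      Pairwise (Function.onFun Disjoint Δ) →
      IsLUB (Set.range fun N => ∑ n ∈ Finset.range N, m (Δ n)) (m (⋃ n, Δ n)))
    {A B : Set X} (hA : MeasurableSet A) (hB : MeasurableSet B) (hd : Disjoint A B) :
    m (A ∪ B) = m A + m B := by
  set Δ : ℕ → Set X := fun n => if n = 0 then A else if n = 1 then B else ∅ with hΔ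
  have hmeas : ∀ n, MeasurableSet (Δ n) := by
    intro n; rcases n with _ | _ | n <;> simp [Δ, hA, hB]
  have hpair : Pairwise (Function.onFun Disjoint Δ) := by
    intro i j hij
    simp only [Function.onFun]
    rcases i with _ | _ | i <;> rcases j with _ | _ | j <;>
      simp_all [Δ, hd, hd.symm]
  have hU : (⋃ n, Δ n) = A ∪ B := by
    apply Set.Subset.antisymm
    · exact Set.iUnion_subset fun n => by
        rcases n with _ | _ | n <;> simp [Δ]
    · rintro x (hx | hx)
      · exact Set.mem_iUnion.2 ⟨0, by simpa [Δ] using hx⟩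
      · exact Set.mem_iUnion.2 ⟨1, by simpa [Δ] using hx⟩
  have hsum : ∀ k, (∑ n ∈ Finset.range (k + 2), m (Δ n)) = m A + m B := by
    intro k
    induction k with
    | zero => simp [Finset.sum_range_succ, Δ, h0]
    | succ k ih =>
      have he : Δ (k + 2) = ∅ := by simp [Δ]
      rw [show k + 1 + 2 = (k + 2) + 1 by omega, Finset.sum_range_succ, ih, he, h0, add_zero]
  have hlub := hsig Δ hmeas hpair
  rw [hU] at hlub
  have hmem : m A + m B ∈ Set.range fun N => ∑ n ∈ Finset.range N, m (Δ n) :=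
    ⟨2, hsum 0⟩
  have hub : m A + m B ∈ upperBounds (Set.range fun N => ∑ n ∈ Finset.range N, m (Δ n)) := by
    rintro x ⟨N, rfl⟩
    rcases Nat.lt_or_ge N 2 with hN | hN
    · interval_cases N
      · simpa using add_nonneg (hpos A hA) (hpos B hB)
      · simpa [Finset.sum_range_one, Δ] using le_add_of_nonneg_right (hpos B hB)
    · obtain ⟨k, rfl⟩ : ∃ k, N = k + 2 := ⟨N - 2, by omega⟩
      exact (hsum k).le
  exact hlub.unique ⟨hub, fun c hc => hc hmem⟩

theorem my_finadd {m : Set X → F} (h0 : m ∅ = 0)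
    (hadd : ∀ A B, MeasurableSet A → MeasurableSet B → Disjoint A B →
      m (A ∪ B) = m A + m B)
    (Δ : ℕ → Set X) (hm : ∀ n, MeasurableSet (Δ n))
    (hp : Pairwise (Function.onFun Disjoint Δ)) (N : ℕ) :
    m (⋃ n, ⋃ _ : n < N, Δ n) = ∑ n ∈ Finset.range N, m (Δ n) := by
  induction N with
  | zero =>
    have : (⋃ n, ⋃ _ : n < 0, Δ n) = (∅ : Set X) := by simp
    rw [this, h0]; simp
  | succ k ih =>
    have hd : Disjoint (⋃ n, ⋃ _ : n < k, Δ n) (Δ k) :=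
      Set.disjoint_iUnion_left.2 fun i =>
        Set.disjoint_iUnion_left.2 fun hi => hp hi.ne
    rw [Set.biUnion_lt_succ,
      hadd _ _ (MeasurableSet.iUnion fun i => MeasurableSet.iUnion fun _ => hm i) (hm k) hd,
      ih, Finset.sum_range_succ]

theorem my_mono {m : Set X → F}
    (hpos : ∀ Δ, MeasurableSet Δ → 0 ≤ m Δ)
    (hadd : ∀ A B, MeasurableSet A → MeasurableSet B → Disjoint A B →
      m (A ∪ B) = m A + m B)
    {A B : Set X} (hA : MeasurableSet A) (hB : MeasurableSet B) (hsub : A ⊆ B) :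
    m A ≤ m B := by
  have : m B = m A + m (B \ A) := by
    rw [← hadd A (B \ A) hA (hB.diff hA) disjoint_sdiff_self_right,
      Set.union_diff_cancel hsub]
  rw [this]
  exact le_add_of_nonneg_right (hpos _ (hB.diff hA))

end Aux

variable {X : Type*} [MeasurableSpace X]
variable {E : Type*} [Lattice E] [AddCommGroup E]
  [CovariantClass E E (· + ·) (· ≤ ·)]

/-- A finite `E⁺`-valued measure: a σ-additive set map into `E⁺`
vanishing at `∅`. -/
def IsFinMeasure (μ : Set X → E) : Prop :=
  μ ∅ = 0 ∧ (∀ Δ, MeasurableSet Δ → 0 ≤ μ Δ) ∧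
    ∀ Δ : ℕ → Set X, (∀ n, MeasurableSet (Δ n)) →
      Pairwise (Function.onFun Disjoint Δ) →
      IsLUB (Set.range fun N => ∑ n ∈ Finset.range N, μ (Δ n))
        (μ (⋃ n, Δ n))

/-- An `E̅⁺`-valued measure, `E̅ = WithTop E`. -/
def IsEMeasure (μ : Set X → WithTop E) : Prop :=
  μ ∅ = 0 ∧ (∀ Δ, MeasurableSet Δ → 0 ≤ μ Δ) ∧
    ∀ Δ : ℕ → Set X, (∀ n, MeasurableSet (Δ n)) →
      Pairwise (Function.onFun Disjoint Δ) →
      IsLUB (Set.range fun N => ∑ n ∈ Finset.range N, μ (Δ n))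
        (μ (⋃ n, Δ n))

/-- for finite `E⁺`-valued measures `μ, ν`, the set map
`ρ(Δ) = inf {μ(Γ) + ν(Δ∖Γ) : Γ measurable ⊆ Δ}` is a finite `E⁺`-valued
measure and is the infimum of `μ` and `ν` in the cone of `E̅⁺`-valued
measures; moreover `μ∨ν + μ∧ν = μ + ν`, where `μ∨ν` is given by the
corresponding supremum formula. -/
theorem stmt_11 (hDed : ∀ T : Set E, T.Nonempty → BddAbove T → ∃ a, IsLUB T a)
    (μ ν : Set X → E) (hμ : IsFinMeasure μ) (hν : IsFinMeasure ν)
    (ρ : Set X → E)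
    (hρ : ∀ Δ, MeasurableSet Δ →
      IsGLB {z : E | ∃ Γ, MeasurableSet Γ ∧ Γ ⊆ Δ ∧ z = μ Γ + ν (Δ \ Γ)}
        (ρ Δ))
    (ξ : Set X → E)
    (hξ : ∀ Δ, MeasurableSet Δ →
      IsLUB {z : E | ∃ Γ, MeasurableSet Γ ∧ Γ ⊆ Δ ∧ z = μ Γ + ν (Δ \ Γ)}
        (ξ Δ)) :
    IsFinMeasure ρ ∧
      (∀ Δ, MeasurableSet Δ → ρ Δ ≤ μ Δ ∧ ρ Δ ≤ ν Δ) ∧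
      (∀ σ : Set X → WithTop E, IsEMeasure σ →
        (∀ Δ, MeasurableSet Δ → σ Δ ≤ (μ Δ : WithTop E)) →
        (∀ Δ, MeasurableSet Δ → σ Δ ≤ (ν Δ : WithTop E)) →
        ∀ Δ, MeasurableSet Δ → σ Δ ≤ (ρ Δ : WithTop E)) ∧
      ∀ Δ, MeasurableSet Δ → ξ Δ + ρ Δ = μ Δ + ν Δ := by
  clear hDed
  obtain ⟨hμ0, hμpos, hμsig⟩ := hμ
  obtain ⟨hν0, hνpos, hνsig⟩ := hν
  set S : Set X → Set E :=
    fun Δ => {z : E | ∃ Γ, MeasurableSet Γ ∧ Γ ⊆ Δ ∧ z = μ Γ + ν (Δ \ Γ)} with hSdef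
  have hμadd : ∀ A B, MeasurableSet A → MeasurableSet B → Disjoint A B →
      μ (A ∪ B) = μ A + μ B := fun A B hA hB hd => my_meas_add hμ0 hμpos hμsig hA hB hd
  have hνadd : ∀ A B, MeasurableSet A → MeasurableSet B → Disjoint A B →
      ν (A ∪ B) = ν A + ν B := fun A B hA hB hd => my_meas_add hν0 hνpos hνsig hA hB hd
  have hρpos : ∀ Δ, MeasurableSet Δ → 0 ≤ ρ Δ := by
    intro Δ hΔ
    refine (hρ Δ hΔ).2 ?_
    rintro z ⟨Γ, hΓ, hsub, rfl⟩
    exact add_nonneg (hμpos Γ hΓ) (hνpos _ (hΔ.diff hΓ))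
  have hρ0 : ρ ∅ = 0 := by
    have hm : (0 : E) ∈ S ∅ :=
      ⟨∅, MeasurableSet.empty, subset_rfl, by simp [hμ0, hν0]⟩
    exact le_antisymm ((hρ ∅ MeasurableSet.empty).1 hm) (hρpos ∅ MeasurableSet.empty)
  have hρleμ : ∀ Δ, MeasurableSet Δ → ρ Δ ≤ μ Δ := fun Δ hΔ =>
    (hρ Δ hΔ).1 ⟨Δ, hΔ, subset_rfl, by simp [hν0]⟩
  have hρleν : ∀ Δ, MeasurableSet Δ → ρ Δ ≤ ν Δ := fun Δ hΔ =>
    (hρ Δ hΔ).1 ⟨∅, MeasurableSet.empty, Set.empty_subset Δ, by simp [hμ0]⟩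
  -- sums of elements of `S A` and `S B` lie in `S (A ∪ B)`
  have hSmem : ∀ {A B : Set X}, MeasurableSet A → MeasurableSet B → Disjoint A B →
      ∀ s ∈ S A, ∀ t ∈ S B, s + t ∈ S (A ∪ B) := by
    intro A B hA hB hd s hs t ht
    obtain ⟨Γa, hΓa, hsa, rfl⟩ := hs
    obtain ⟨Γb, hΓb, hsb, rfl⟩ := ht
    refine ⟨Γa ∪ Γb, hΓa.union hΓb, Set.union_subset_union hsa hsb, ?_⟩
    have h1 : μ (Γa ∪ Γb) = μ Γa + μ Γb := hμadd _ _ hΓa hΓb (hd.mono hsa hsb)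
    have h2 : (A ∪ B) \ (Γa ∪ Γb) = (A \ Γa) ∪ (B \ Γb) := by
      ext x
      simp only [Set.mem_diff, Set.mem_union, not_or]
      constructor
      · rintro ⟨hx | hx, hna, hnb⟩
        · exact Or.inl ⟨hx, hna⟩
        · exact Or.inr ⟨hx, hnb⟩
      · rintro (⟨hx, hna⟩ | ⟨hx, hnb⟩)
        · exact ⟨Or.inl hx, hna, fun hb => Set.disjoint_left.1 hd hx (hsb hb)⟩
        · exact ⟨Or.inr hx, fun ha => Set.disjoint_left.1 hd (hsa ha) hx, hnb⟩
    have h3 : ν ((A ∪ B) \ (Γa ∪ Γb)) = ν (A \ Γa) + ν (B \ Γb) := by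
      rw [h2]
      exact hνadd _ _ (hA.diff hΓa) (hB.diff hΓb)
        (hd.mono Set.diff_subset Set.diff_subset)
    rw [h1, h3]; abel
  -- finite additivity of ρ
  have hρadd : ∀ A B, MeasurableSet A → MeasurableSet B → Disjoint A B →
      ρ (A ∪ B) = ρ A + ρ B := by
    intro A B hA hB hd
    have hAB := hρ (A ∪ B) (hA.union hB)
    refine le_antisymm ?_ ?_
    · have key : ∀ t ∈ S B, ρ (A ∪ B) ≤ ρ A + t := by
        intro t ht
        have hlb : ρ (A ∪ B) - t ∈ lowerBounds (S A) := by
          intro s hs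
          exact sub_le_iff_le_add.2 (hAB.1 (hSmem hA hB hd s hs t ht))
        exact sub_le_iff_le_add.1 ((hρ A hA).2 hlb)
      have hlb2 : ρ (A ∪ B) - ρ A ∈ lowerBounds (S B) := fun t ht =>
        sub_le_iff_le_add'.2 (key t ht)
      exact sub_le_iff_le_add'.1 ((hρ B hB).2 hlb2)
    · refine hAB.2 ?_
      rintro z ⟨Γ, hΓ, hsub, rfl⟩
      have hsplit : Γ = (Γ ∩ A) ∪ (Γ ∩ B) := by
        rw [← Set.inter_union_distrib_left, Set.inter_eq_left.2 hsub]
      have e1 : μ Γ = μ (Γ ∩ A) + μ (Γ ∩ B) := by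
        rw [show μ Γ = μ ((Γ ∩ A) ∪ (Γ ∩ B)) from by rw [← hsplit]]
        exact hμadd _ _ (hΓ.inter hA) (hΓ.inter hB)
          (hd.mono Set.inter_subset_right Set.inter_subset_right)
      have e3 : ν ((A ∪ B) \ Γ) = ν (A \ Γ) + ν (B \ Γ) := by
        rw [Set.union_diff_distrib]
        exact hνadd _ _ (hA.diff hΓ) (hB.diff hΓ)
          (hd.mono Set.diff_subset Set.diff_subset)
      have l1 : ρ A ≤ μ (Γ ∩ A) + ν (A \ Γ) :=
        (hρ A hA).1 ⟨Γ ∩ A, hΓ.inter hA, Set.inter_subset_right,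
          by rw [Set.diff_inter_self_eq_diff]⟩
      have l2 : ρ B ≤ μ (Γ ∩ B) + ν (B \ Γ) :=
        (hρ B hB).1 ⟨Γ ∩ B, hΓ.inter hB, Set.inter_subset_right,
          by rw [Set.diff_inter_self_eq_diff]⟩
      rw [e1, e3]
      calc ρ A + ρ B ≤ (μ (Γ ∩ A) + ν (A \ Γ)) + (μ (Γ ∩ B) + ν (B \ Γ)) :=
            add_le_add l1 l2
        _ = μ (Γ ∩ A) + μ (Γ ∩ B) + (ν (A \ Γ) + ν (B \ Γ)) := by abel
  -- σ-additivity of ρ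
  have hρsig : ∀ Δ : ℕ → Set X, (∀ n, MeasurableSet (Δ n)) →
      Pairwise (Function.onFun Disjoint Δ) →
      IsLUB (Set.range fun N => ∑ n ∈ Finset.range N, ρ (Δ n)) (ρ (⋃ n, Δ n)) := by
    intro Δ hm hp
    set D : Set X := ⋃ n, Δ n with hD
    set U : ℕ → Set X := fun N => ⋃ n, ⋃ _ : n < N, Δ n with hUdef
    have hDm : MeasurableSet D := MeasurableSet.iUnion hm
    have hUm : ∀ N, MeasurableSet (U N) :=
      fun N => MeasurableSet.iUnion fun i => MeasurableSet.iUnion fun _ => hm i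
    have hUsub : ∀ N, U N ⊆ D :=
      fun N => Set.iUnion₂_subset fun i _ => Set.subset_iUnion Δ i
    have hρU : ∀ N, ρ (U N) = ∑ n ∈ Finset.range N, ρ (Δ n) :=
      fun N => my_finadd hρ0 hρadd Δ hm hp N
    have hμU : ∀ N, μ (U N) = ∑ n ∈ Finset.range N, μ (Δ n) :=
      fun N => my_finadd hμ0 hμadd Δ hm hp N
    constructor
    · rintro x ⟨N, rfl⟩
      show ∑ n ∈ Finset.range N, ρ (Δ n) ≤ ρ D
      rw [← hρU N]
      exact my_mono hρpos hρadd (hUm N) hDm (hUsub N)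
    · intro b hb
      have hρDsplit : ∀ N, ρ D = ρ (U N) + ρ (D \ U N) := by
        intro N
        rw [← hρadd _ _ (hUm N) (hDm.diff (hUm N)) disjoint_sdiff_self_right,
          Set.union_diff_cancel (hUsub N)]
      have hμDsplit : ∀ N, μ D = μ (U N) + μ (D \ U N) := by
        intro N
        rw [← hμadd _ _ (hUm N) (hDm.diff (hUm N)) disjoint_sdiff_self_right,
          Set.union_diff_cancel (hUsub N)]
      have hub2 : (b + μ D - ρ D) ∈
          upperBounds (Set.range fun N => ∑ n ∈ Finset.range N, μ (Δ n)) := by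
        rintro x ⟨N, rfl⟩
        show ∑ n ∈ Finset.range N, μ (Δ n) ≤ b + μ D - ρ D
        rw [← hμU N]
        refine le_sub_iff_add_le.2 ?_
        calc μ (U N) + ρ D = μ (U N) + (ρ (U N) + ρ (D \ U N)) := by rw [← hρDsplit N]
          _ ≤ μ (U N) + (b + μ (D \ U N)) :=
              add_le_add_right (add_le_add (by rw [hρU N]; exact hb ⟨N, rfl⟩)
                (hρleμ _ (hDm.diff (hUm N)))) _
          _ = μ (U N) + μ (D \ U N) + b := by abel
          _ = μ D + b := by rw [← hμDsplit N]
          _ = b + μ D := add_comm _ _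
      have hled : μ D ≤ b + μ D - ρ D := (hμsig Δ hm hp).2 hub2
      have h2 : μ D + ρ D ≤ μ D + b := by
        calc μ D + ρ D ≤ b + μ D := le_sub_iff_add_le.1 hled
          _ = μ D + b := add_comm _ _
      exact le_of_add_le_add_left h2
  refine ⟨⟨hρ0, hρpos, hρsig⟩, fun Δ hΔ => ⟨hρleμ Δ hΔ, hρleν Δ hΔ⟩, ?_, ?_⟩
  · -- greatest lower bound among E̅⁺-valued measures
    rintro σ ⟨hσ0, hσpos, hσsig⟩ hσμ hσν Δ hΔ
    have hσadd : ∀ A B, MeasurableSet A → MeasurableSet B → Disjoint A B →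
        σ (A ∪ B) = σ A + σ B := fun A B hA hB hd =>
      my_meas_add hσ0 hσpos hσsig hA hB hd
    have hkey : ∀ z ∈ S Δ, σ Δ ≤ (z : WithTop E) := by
      rintro z ⟨Γ, hΓ, hsub, rfl⟩
      have hsplit : σ Δ = σ Γ + σ (Δ \ Γ) := by
        rw [← hσadd Γ (Δ \ Γ) hΓ (hΔ.diff hΓ) disjoint_sdiff_self_right,
          Set.union_diff_cancel hsub]
      rw [hsplit, WithTop.coe_add]
      exact add_le_add (hσμ Γ hΓ) (hσν _ (hΔ.diff hΓ))
    have hne : σ Δ ≠ ⊤ := ne_top_of_le_ne_top WithTop.coe_ne_top (hσμ Δ hΔ)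
    obtain ⟨a, ha⟩ := WithTop.ne_top_iff_exists.1 hne
    have halb : a ∈ lowerBounds (S Δ) := by
      intro z hz
      have h := hkey z hz
      rw [← ha] at h
      exact WithTop.coe_le_coe.1 h
    rw [← ha]
    exact WithTop.coe_le_coe.2 ((hρ Δ hΔ).2 halb)
  · -- ξ + ρ = μ + ν
    intro Δ hΔ
    have hsym : ∀ z ∈ S Δ, μ Δ + ν Δ - z ∈ S Δ := by
      rintro z ⟨Γ, hΓ, hsub, rfl⟩
      refine ⟨Δ \ Γ, hΔ.diff hΓ, Set.diff_subset, ?_⟩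
      have e1 : μ Δ = μ Γ + μ (Δ \ Γ) := by
        rw [← hμadd _ _ hΓ (hΔ.diff hΓ) disjoint_sdiff_self_right,
          Set.union_diff_cancel hsub]
      have e2 : ν Δ = ν Γ + ν (Δ \ Γ) := by
        rw [← hνadd _ _ hΓ (hΔ.diff hΓ) disjoint_sdiff_self_right,
          Set.union_diff_cancel hsub]
      rw [Set.diff_diff_cancel_left hsub, e1, e2]
      abel
    have hl : IsLUB (S Δ) (μ Δ + ν Δ - ρ Δ) := by
      constructor
      · intro z hz
        exact le_sub_comm.1 ((hρ Δ hΔ).1 (hsym z hz))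
      · intro c hc
        have hlb : μ Δ + ν Δ - c ∈ lowerBounds (S Δ) := fun z hz =>
          sub_le_comm.1 (hc (hsym z hz))
        exact sub_le_comm.1 ((hρ Δ hΔ).2 hlb)
    have hxe : ξ Δ = μ Δ + ν Δ - ρ Δ := (hξ Δ hΔ).unique hl
    rw [hxe]; abel
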